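/- (Suleimanova/Friedland) Let λ_1 ≥ 0 and λ_2, ..., λ_n ≤ 0 be real numbers with λ_1 + λ_2 + ... + λ_n ≥ 0. Then the companion matrix of f(x) = ∏_{i=1}^n (x - λ_i) has all entries nonnegative; in particular (λ_1,...,λ_n) is the spectrum of a nonnegative matrix. -/

import Mathlib

open Polynomial Matrix

/-- All low coefficients of `(X - a) * ∏ (X - μ)` are nonpositive when `a ≥ 0`,
    all `μ ≤ 0` and `a + ∑ μ ≥ 0`. -/
lemma sule_coeff_nonpos (a : ℝ) (ha : 0 ≤ a) (s : Multiset ℝ) :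
    (∀ x ∈ s, x ≤ 0) → 0 ≤ a + s.sum →
    ∀ k < Multiset.card s + 1,
      ((X - C a) * (s.map fun μ => X - C μ).prod).coeff k ≤ 0 := by
  induction s using Multiset.induction with
  | empty =>
    intro _ _ k hk
    have hk0 : k = 0 := by simp at hk; omega
    subst hk0
    simpa using neg_nonpos.mpr ha
  | cons μ s ih =>
    intro hs hsum k hk
    have hμ : μ ≤ 0 := hs μ (Multiset.mem_cons_self μ s)
    have hs' : ∀ x ∈ s, x ≤ 0 := fun x hx => hs x (Multiset.mem_cons_of_mem hx)
    have hsumc : (μ ::ₘ s).sum = μ + s.sum := Multiset.sum_cons μ s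
    have hsum' : 0 ≤ a + s.sum := by rw [hsumc] at hsum; linarith
    have hrw : (X - C a) * ((μ ::ₘ s).map fun μ => X - C μ).prod =
        ((X - C a) * (s.map fun μ => X - C μ).prod) * (X - C μ) := by
      rw [Multiset.map_cons, Multiset.prod_cons]; ring
    rw [Multiset.card_cons] at hk
    rw [hrw]
    set q := (X - C a) * (s.map fun μ => X - C μ).prod with hqdef
    rcases lt_or_eq_of_le (Nat.lt_succ_iff.mp hk) with hk' | hk'
    · -- k < card s + 1
      match k, hk' with
      | 0, hk' =>
        rw [Polynomial.mul_coeff_zero]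
        have h0 : q.coeff 0 ≤ 0 := ih hs' hsum' 0 (Nat.succ_pos _)
        have : (X - C μ).coeff 0 = -μ := by simp
        rw [this]
        nlinarith
      | (m+1), hk' =>
        rw [Polynomial.coeff_mul_X_sub_C]
        have h1 : q.coeff m ≤ 0 := ih hs' hsum' m (by omega)
        have h2 : q.coeff (m+1) ≤ 0 := ih hs' hsum' (m+1) hk'
        nlinarith
    · -- k = card s + 1 : top subleading coefficient
      have hprod : q * (X - C μ) = ((a ::ₘ μ ::ₘ s).map fun x => X - C x).prod := by
        simp only [Multiset.map_cons, Multiset.prod_cons, hqdef]; ring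
      have hdeg : (((a ::ₘ μ ::ₘ s).map fun x => X - C x).prod).natDegree
          = Multiset.card s + 2 := by
        rw [natDegree_multiset_prod_X_sub_C_eq_card]; simp
      have hnc := multiset_prod_X_sub_C_nextCoeff (a ::ₘ μ ::ₘ s)
      rw [nextCoeff_of_natDegree_pos (by rw [hdeg]; omega), hdeg] at hnc
      have : (Multiset.card s + 2) - 1 = Multiset.card s + 1 := by omega
      rw [this] at hnc
      rw [hk', hprod, hnc]
      have : (a ::ₘ μ ::ₘ s).sum = a + (μ + s.sum) := by
        rw [Multiset.sum_cons, Multiset.sum_cons]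
      rw [hsumc] at hsum
      rw [this]
      linarith

lemma sule_eig_aeval {R : Type*} [CommRing R] {n : ℕ} (M : Matrix (Fin n) (Fin n) R)
    (v : Fin n → R) (μ : R) (h : M.mulVec v = μ • v) (p : Polynomial R) :
    (aeval M p).mulVec v = eval μ p • v := by
  have hpow : ∀ k : ℕ, (M ^ k).mulVec v = μ ^ k • v := by
    intro k
    induction k with
    | zero => simp [Matrix.one_mulVec]
    | succ k ihk =>
      rw [pow_succ', ← Matrix.mulVec_mulVec, ihk, Matrix.mulVec_smul, h, smul_smul,
        ← pow_succ]
  induction p using Polynomial.induction_on' with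
  | add p q hp hq => rw [map_add, Matrix.add_mulVec, hp, hq, eval_add, add_smul]
  | monomial k a =>
    rw [aeval_monomial, eval_monomial, ← Algebra.smul_def, Matrix.smul_mulVec,
      hpow, smul_smul]

/-- Suleimanova/Friedland: if λ₁ ≥ 0 ≥ λ₂,...,λₙ and λ₁ + ... + λₙ ≥ 0, then the companion
    matrix of f(x) = ∏(x - λᵢ) is entrywise nonnegative; in particular (λ₁,...,λₙ) is the
    spectrum of a nonnegative matrix. -/
theorem suleimanova (n : ℕ) (hn : 0 < n) (lam : Fin n → ℝ)
    (h0 : 0 ≤ lam ⟨0, hn⟩) (hneg : ∀ i : Fin n, i ≠ ⟨0, hn⟩ → lam i ≤ 0)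
    (hsum : 0 ≤ ∑ i, lam i)
    (f : Polynomial ℝ) (hf : f = ∏ i, (X - C (lam i)))
    (Cmat : Matrix (Fin n) (Fin n) ℝ)
    (hC : ∀ i j : Fin n, Cmat i j =
      if (j : ℕ) = (i : ℕ) + 1 then 1
      else if (i : ℕ) = n - 1 then -f.coeff (j : ℕ) else 0) :
    (∀ i j, 0 ≤ Cmat i j) ∧ Cmat.charpoly = f := by
  classical
  set z : Fin n := ⟨0, hn⟩ with hz
  have hmf : f.Monic := by
    rw [hf]; exact monic_prod_of_monic _ _ fun i _ => monic_X_sub_C _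
  have hdegf : f.natDegree = n := by
    rw [hf, natDegree_prod _ _ fun i _ => X_sub_C_ne_zero (lam i)]
    simp
  -- Part 1 : nonpositivity of the low coefficients of f
  have hcoeff : ∀ k < n, f.coeff k ≤ 0 := by
    intro k hk
    set s : Multiset ℝ := (Finset.univ.erase z).val.map lam with hsdef
    have hfs : f = (X - C (lam z)) * (s.map fun μ => X - C μ).prod := by
      rw [hf, ← Finset.mul_prod_erase Finset.univ _ (Finset.mem_univ z),
        Finset.prod_eq_multiset_prod, hsdef, Multiset.map_map]
      rfl
    have hcard : Multiset.card s = n - 1 := by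
      rw [hsdef, Multiset.card_map]
      simp [Finset.card_erase_of_mem]
    have hss : ∀ x ∈ s, x ≤ 0 := by
      intro x hx
      rw [hsdef] at hx
      obtain ⟨i, hi, rfl⟩ := Multiset.mem_map.mp hx
      exact hneg i (Finset.ne_of_mem_erase (Finset.mem_val.mp hi))
    have hsum2 : 0 ≤ lam z + s.sum := by
      have hseq : s.sum = ∑ i ∈ Finset.univ.erase z, lam i := by
        rw [hsdef, Finset.sum_eq_multiset_sum]
      rw [hseq, Finset.add_sum_erase _ _ (Finset.mem_univ z)]
      exact hsum
    have hk' : k < Multiset.card s + 1 := by omega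
    have := sule_coeff_nonpos (lam z) h0 s hss hsum2 k hk'
    rwa [← hfs] at this
  have hpos : ∀ i j, 0 ≤ Cmat i j := by
    intro i j
    rw [hC]
    split_ifs with h1 h2
    · exact zero_le_one
    · have := hcoeff (j : ℕ) j.2; linarith
    · exact le_refl 0
  refine ⟨hpos, ?_⟩
  -- Part 2 : charpoly = f, via AdjoinRoot
  have hf0 : f ≠ 0 := hmf.ne_zero
  set R := AdjoinRoot f with hR
  set r : R := AdjoinRoot.root f with hr
  set φ : ℝ →+* R := algebraMap ℝ R with hφ
  set v : Fin n → R := fun i => r ^ (i : ℕ) with hv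
  set M : Matrix (Fin n) (Fin n) R := Cmat.map φ with hM
  have hroot : (∑ j : Fin n, φ (-f.coeff (j : ℕ)) * r ^ (j : ℕ)) = r ^ n := by
    have h1 : (aeval r f : R) = 0 := by rw [AdjoinRoot.aeval_eq, AdjoinRoot.mk_self]
    rw [aeval_eq_sum_range, hdegf, Finset.sum_range_succ] at h1
    have hc : f.coeff n = 1 := by
      have h := hmf.coeff_natDegree; rwa [hdegf] at h
    rw [hc, one_smul] at h1
    have h2 : r ^ n = -∑ i ∈ Finset.range n, f.coeff i • r ^ i :=
      eq_neg_of_add_eq_zero_right h1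
    rw [Fin.sum_univ_eq_sum_range (fun i => φ (-f.coeff i) * r ^ i) n, h2,
      ← Finset.sum_neg_distrib]
    refine Finset.sum_congr rfl fun i _ => ?_
    rw [map_neg, neg_mul, Algebra.smul_def]
  have heig : M.mulVec v = r • v := by
    funext i
    simp only [Matrix.mulVec, dotProduct, Pi.smul_apply, smul_eq_mul]
    by_cases hi : (i : ℕ) = n - 1
    · have hentry : ∀ j : Fin n, M i j = φ (-f.coeff (j : ℕ)) := by
        intro j
        have hne : ¬((j : ℕ) = (i : ℕ) + 1) := by have := j.2; omega
        simp only [hM, Matrix.map_apply, hC i j, if_neg hne, if_pos hi]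
      calc ∑ j, M i j * v j = ∑ j : Fin n, φ (-f.coeff (j : ℕ)) * r ^ (j : ℕ) :=
            Finset.sum_congr rfl fun j _ => by rw [hentry j]
        _ = r ^ n := hroot
        _ = r * r ^ (i : ℕ) := by rw [hi, ← pow_succ']; congr 1; omega
  
    · have hlt : (i : ℕ) + 1 < n := by have := i.2; omega
      rw [Finset.sum_eq_single (⟨(i : ℕ) + 1, hlt⟩ : Fin n)]
      · have : M i ⟨(i : ℕ) + 1, hlt⟩ = 1 := by simp [hM, Matrix.map_apply, hC]
        rw [this, one_mul, hv]
        simp [pow_succ']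
      · intro j _ hj
        have hne : (j : ℕ) ≠ (i : ℕ) + 1 := fun h => hj (Fin.ext h)
        simp [hM, Matrix.map_apply, hC, hne, hi]
      · exact fun h => absurd (Finset.mem_univ _) h
  have hch : Cmat.charpoly.Monic := Cmat.charpoly_monic
  have hchdeg : Cmat.charpoly.natDegree = n := by
    rw [Matrix.charpoly_natDegree_eq_dim, Fintype.card_fin]
  have haev : (aeval r Cmat.charpoly : R) = 0 := by
    have h1 : aeval M Cmat.charpoly = 0 := by
      have hMM : M = (AlgHom.mapMatrix (Algebra.ofId ℝ R)) Cmat := rfl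
      rw [hMM, aeval_algHom_apply, Matrix.aeval_self_charpoly, map_zero]
    have h2 := sule_eig_aeval M v r heig (Cmat.charpoly.map φ)
    rw [hφ, aeval_map_algebraMap, h1, Matrix.zero_mulVec, eval_map, ← aeval_def] at h2
    have h3 := congrFun h2 z
    simpa [hv, hz] using h3.symm
  have hdvd : f ∣ Cmat.charpoly := by
    rwa [AdjoinRoot.aeval_eq, AdjoinRoot.mk_eq_zero] at haev
  exact eq_of_monic_of_dvd_of_natDegree_le hmf hch hdvd
    (le_of_eq (hchdeg.trans hdegf.symm))
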